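/- Let V be a vector space over a field k and consider the reduced tensor space T̄(V) = ⊕_{n≥1} V^{⊗n} with the product (v₁⊗…⊗v_p) ≻ (v_{p+1}⊗…⊗v_{p+q}) := ((v₁⊗…⊗v_p) ⧢ (v_{p+1}⊗…⊗v_{p+q−1})) ⊗ v_{p+q}, where ⧢ denotes the shuffle product. Then ⟨T̄(V), ≻⟩ is a precommutative (Zinbiel) algebra. -/

import Mathlib

/-- The shuffle of two words, as an element of the free module on words. -/
noncomputable def shuffleWord {k ι : Type*} [Field k] : List ι → List ι → (List ι →₀ k)
  | [], b => Finsupp.single b 1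
  | a, [] => Finsupp.single a 1
  | x :: xs, y :: ys =>
      (shuffleWord xs (y :: ys)).mapDomain (x :: ·) +
      (shuffleWord (x :: xs) ys).mapDomain (y :: ·)
  termination_by a b => a.length + b.length

/-- `(v₁⊗…⊗v_p) ≻ (v_{p+1}⊗…⊗v_{p+q}) = ((v₁⊗…⊗v_p) ⧢ (v_{p+1}⊗…⊗v_{p+q-1})) ⊗ v_{p+q}`
on words. -/
noncomputable def preMulWord {k ι : Type*} [Field k] (a b : List ι) : List ι →₀ k :=
  match b.getLast? with
  | none => 0
  | some l => (shuffleWord (k := k) a b.dropLast).mapDomain (· ++ [l])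

/-- The bilinear extension of `preMulWord` to the free module on words. -/
noncomputable def preMul {k ι : Type*} [Field k] (f g : List ι →₀ k) : List ι →₀ k :=
  f.sum fun u cu => g.sum fun v cv => (cu * cv) • preMulWord u v

/-- The reduced tensor space `T̄(V) = ⊕_{n ≥ 1} V^{⊗n}`: the span of nonempty
words in a basis `ι` of `V`. -/
noncomputable def reducedTensor (k ι : Type*) [Field k] : Submodule k (List ι →₀ k) :=
  Submodule.span k {f | ∃ w : List ι, w ≠ [] ∧ f = Finsupp.single w 1}

section Aux
variable {k ι : Type*} [Field k]

lemma shuffleWord_nil_left (b : List ι) : shuffleWord (k := k) [] b = Finsupp.single b 1 := by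
  rw [shuffleWord]

lemma shuffleWord_nil_right (a : List ι) : shuffleWord (k := k) a [] = Finsupp.single a 1 := by
  cases a <;> simp [shuffleWord]

lemma shuffleWord_cons_cons (x y : ι) (xs ys : List ι) :
    shuffleWord (k := k) (x :: xs) (y :: ys) =
      (shuffleWord xs (y :: ys)).mapDomain (x :: ·) +
      (shuffleWord (x :: xs) ys).mapDomain (y :: ·) := by
  rw [shuffleWord]

/-- left-bilinear extension of shuffle -/
noncomputable def shufL (f : List ι →₀ k) (c : List ι) : List ι →₀ k :=
  f.sum fun w cw => cw • shuffleWord w c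

/-- right-bilinear extension of shuffle -/
noncomputable def shufR (a : List ι) (g : List ι →₀ k) : List ι →₀ k :=
  g.sum fun w cw => cw • shuffleWord a w

lemma shufL_single (a c : List ι) : shufL (Finsupp.single a (1 : k)) c = shuffleWord a c := by
  simp [shufL, Finsupp.sum_single_index]

lemma shufR_single (a b : List ι) : shufR a (Finsupp.single b (1 : k)) = shuffleWord a b := by
  simp [shufR, Finsupp.sum_single_index]

lemma shufL_add (f g : List ι →₀ k) (c : List ι) :
    shufL (f + g) c = shufL f c + shufL g c :=
  Finsupp.sum_add_index' (fun _ => zero_smul _ _) (fun _ _ _ => add_smul _ _ _)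

lemma shufR_add (a : List ι) (f g : List ι →₀ k) :
    shufR a (f + g) = shufR a f + shufR a g :=
  Finsupp.sum_add_index' (fun _ => zero_smul _ _) (fun _ _ _ => add_smul _ _ _)

lemma shufL_mapDomain (x : ι) (f : List ι →₀ k) (c : List ι) :
    shufL (f.mapDomain (x :: ·)) c = f.sum fun w cw => cw • shuffleWord (x :: w) c :=
  Finsupp.sum_mapDomain_index (fun _ => zero_smul _ _) (fun _ _ _ => add_smul _ _ _)

lemma shufR_mapDomain (a : List ι) (y : ι) (g : List ι →₀ k) :
    shufR a (g.mapDomain (y :: ·)) = g.sum fun w cw => cw • shuffleWord a (y :: w) :=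
  Finsupp.sum_mapDomain_index (fun _ => zero_smul _ _) (fun _ _ _ => add_smul _ _ _)

lemma smulsum_mapDomain (h : List ι → List ι) (f : List ι →₀ k) (F : List ι → (List ι →₀ k)) :
    (f.sum fun w cw => cw • (F w).mapDomain h) =
      Finsupp.mapDomain h (f.sum fun w cw => cw • F w) := by
  rw [show Finsupp.mapDomain h (f.sum fun w cw => cw • F w) =
      (Finsupp.lmapDomain k k h) (f.sum fun w cw => cw • F w) from rfl,
    map_finsuppSum]
  simp [Finsupp.lmapDomain_apply, Finsupp.mapDomain_smul]

lemma shufL_nil (f : List ι →₀ k) : shufL f [] = f := by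
  simp only [shufL, shuffleWord_nil_right, Finsupp.smul_single', mul_one, Finsupp.sum_single]

lemma shufR_nil (g : List ι →₀ k) : shufR [] g = g := by
  simp only [shufR, shuffleWord_nil_left, Finsupp.smul_single', mul_one, Finsupp.sum_single]

lemma expandL (x y z : ι) (xs ys zs : List ι) :
    shufL (shuffleWord (k := k) (x::xs) (y::ys)) (z::zs) =
      (shufL (shuffleWord xs (y::ys)) (z::zs)).mapDomain (x :: ·) +
      (shufL (shuffleWord (x::xs) ys) (z::zs)).mapDomain (y :: ·) +
      (shufL (shuffleWord (x::xs) (y::ys)) zs).mapDomain (z :: ·) := by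
  conv_rhs => rw [shuffleWord_cons_cons x y, shufL_add, shufL_mapDomain, shufL_mapDomain]
  conv_lhs => rw [shuffleWord_cons_cons x y]
  rw [shufL_add, shufL_mapDomain, shufL_mapDomain]
  simp only [shuffleWord_cons_cons x z, shuffleWord_cons_cons y z, smul_add, Finsupp.sum_add,
    smulsum_mapDomain, shufL, Finsupp.mapDomain_add]
  abel

lemma expandR (x y z : ι) (xs ys zs : List ι) :
    shufR (x::xs) (shuffleWord (k := k) (y::ys) (z::zs)) =
      (shufR xs (shuffleWord (y::ys) (z::zs))).mapDomain (x :: ·) +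
      (shufR (x::xs) (shuffleWord ys (z::zs))).mapDomain (y :: ·) +
      (shufR (x::xs) (shuffleWord (y::ys) zs)).mapDomain (z :: ·) := by
  conv_rhs => rw [shuffleWord_cons_cons y z, shufR_add, shufR_mapDomain, shufR_mapDomain]
  conv_lhs => rw [shuffleWord_cons_cons y z]
  rw [shufR_add, shufR_mapDomain, shufR_mapDomain]
  simp only [shuffleWord_cons_cons x y, shuffleWord_cons_cons x z, smul_add, Finsupp.sum_add,
    smulsum_mapDomain, shufR, Finsupp.mapDomain_add]
  abel

lemma shuffle_assoc : ∀ a b c : List ι,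
    shufL (shuffleWord (k := k) a b) c = shufR a (shuffleWord b c) := by
  suffices H : ∀ n, ∀ a b c : List ι, a.length + b.length + c.length = n →
      shufL (shuffleWord (k := k) a b) c = shufR a (shuffleWord b c) from
    fun a b c => H _ a b c rfl
  intro n
  induction n using Nat.strong_induction_on with
  | _ n ih =>
    intro a b c hn
    match a, b, c with
    | [], b, c => rw [shuffleWord_nil_left, shufL_single, shufR_nil]
    | x::xs, [], c => rw [shuffleWord_nil_right, shufL_single, shuffleWord_nil_left, shufR_single]
    | x::xs, y::ys, [] => rw [shufL_nil, shuffleWord_nil_right, shufR_single]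
    | x::xs, y::ys, z::zs =>
      subst hn
      rw [expandL, expandR,
        ih _ (by simp) xs (y::ys) (z::zs) rfl,
        ih _ (by simp) (x::xs) ys (z::zs) rfl,
        ih _ (by simp) (x::xs) (y::ys) zs rfl]

lemma mapDomain_cons_append (u y : ι) (f : List ι →₀ k) :
    (f.mapDomain (· ++ [y])).mapDomain (u :: ·) = (f.mapDomain (u :: ·)).mapDomain (· ++ [y]) := by
  rw [← Finsupp.mapDomain_comp, ← Finsupp.mapDomain_comp]
  rfl

lemma shuffleWord_concat_concat (x y : ι) : ∀ a b : List ι,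
    shuffleWord (k := k) (a ++ [x]) (b ++ [y]) =
      (shuffleWord (a ++ [x]) b).mapDomain (· ++ [y]) +
      (shuffleWord a (b ++ [y])).mapDomain (· ++ [x]) := by
  suffices H : ∀ n, ∀ a b : List ι, a.length + b.length = n →
      shuffleWord (k := k) (a ++ [x]) (b ++ [y]) =
        (shuffleWord (a ++ [x]) b).mapDomain (· ++ [y]) +
        (shuffleWord a (b ++ [y])).mapDomain (· ++ [x]) from
    fun a b => H _ a b rfl
  intro n
  induction n using Nat.strong_induction_on with
  | _ n ih =>
    intro a b hn
    match a, b with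
    | [], [] =>
      simp only [List.nil_append, shuffleWord_cons_cons, shuffleWord_nil_left,
        shuffleWord_nil_right, Finsupp.mapDomain_single, Finsupp.mapDomain_add]
      abel
    | [], v::vs =>
      subst hn
      have IH := ih _ (by simp) [] vs rfl
      simp only [List.nil_append] at IH
      simp only [List.nil_append, List.cons_append, shuffleWord_cons_cons,
        shuffleWord_nil_left, shuffleWord_nil_right, Finsupp.mapDomain_single,
        Finsupp.mapDomain_add]
      rw [IH]
      simp only [shuffleWord_nil_left, shuffleWord_nil_right, Finsupp.mapDomain_add, Finsupp.mapDomain_single, mapDomain_cons_append,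
        List.append_assoc, List.cons_append, List.nil_append, List.singleton_append]
      abel
    | u::us, [] =>
      subst hn
      have IH := ih _ (by simp) us [] rfl
      simp only [List.nil_append] at IH
      simp only [List.nil_append, List.cons_append, shuffleWord_cons_cons,
        shuffleWord_nil_left, shuffleWord_nil_right, Finsupp.mapDomain_single,
        Finsupp.mapDomain_add]
      rw [IH]
      simp only [shuffleWord_nil_left, shuffleWord_nil_right, Finsupp.mapDomain_add, Finsupp.mapDomain_single, mapDomain_cons_append,
        List.append_assoc, List.cons_append, List.nil_append, List.singleton_append]
      abel
    | u::us, v::vs =>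
      subst hn
      have IH1 := ih _ (by simp) us (v::vs) rfl
      have IH2 := ih _ (by simp) (u::us) vs rfl
      simp only [List.cons_append] at IH1 IH2
      simp only [List.cons_append, shuffleWord_cons_cons, Finsupp.mapDomain_add]
      rw [IH1, IH2]
      simp only [shuffleWord_nil_left, shuffleWord_nil_right, Finsupp.mapDomain_add, Finsupp.mapDomain_single, mapDomain_cons_append,
        List.append_assoc, List.cons_append, List.nil_append, List.singleton_append]
      abel

lemma preMulWord_nil_right (a : List ι) : preMulWord a [] = (0 : List ι →₀ k) := rfl

lemma preMulWord_concat (a b : List ι) (n : ι) :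
    preMulWord a (b ++ [n]) = (shuffleWord (k := k) a b).mapDomain (· ++ [n]) := by
  simp [preMulWord, List.getLast?_concat, List.dropLast_concat]

lemma shuffleWord_comm : ∀ a b : List ι, shuffleWord (k := k) a b = shuffleWord b a := by
  suffices H : ∀ n, ∀ a b : List ι, a.length + b.length = n →
      shuffleWord (k := k) a b = shuffleWord b a from fun a b => H _ a b rfl
  intro n
  induction n using Nat.strong_induction_on with
  | _ n ih =>
    intro a b hn
    match a, b with
    | [], b => rw [shuffleWord_nil_left, shuffleWord_nil_right]
    | x::xs, [] => rw [shuffleWord_nil_left, shuffleWord_nil_right]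
    | x::xs, y::ys =>
      subst hn
      rw [shuffleWord_cons_cons, shuffleWord_cons_cons,
        ih _ (by simp) xs (y::ys) rfl, ih _ (by simp) (x::xs) ys rfl, add_comm]

lemma preMulWord_combine {u v : List ι} (huv : u ≠ [] ∨ v ≠ []) :
    preMulWord u v + preMulWord v u = shuffleWord (k := k) u v := by
  rcases List.eq_nil_or_concat u with rfl | ⟨p, m, rfl⟩
  · rcases List.eq_nil_or_concat v with rfl | ⟨q, l, rfl⟩
    · simp at huv
    · simp only [List.concat_eq_append]
      rw [preMulWord_nil_right, preMulWord_concat, shuffleWord_nil_left,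
        shuffleWord_nil_left, Finsupp.mapDomain_single, add_zero]
  · rcases List.eq_nil_or_concat v with rfl | ⟨q, l, rfl⟩
    · simp only [List.concat_eq_append]
      rw [preMulWord_nil_right, preMulWord_concat, shuffleWord_nil_left,
        shuffleWord_nil_right, Finsupp.mapDomain_single, zero_add]
    · simp only [List.concat_eq_append]
      rw [preMulWord_concat, preMulWord_concat, shuffleWord_concat_concat,
        shuffleWord_comm (q ++ [l]) p]

lemma preMul_zero_left (g : List ι →₀ k) : preMul 0 g = 0 := Finsupp.sum_zero_index

lemma preMul_zero_right (f : List ι →₀ k) : preMul f 0 = 0 := by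
  simp [preMul, Finsupp.sum_zero_index]

lemma preMul_add_left (f f' g : List ι →₀ k) :
    preMul (f + f') g = preMul f g + preMul f' g := by
  refine Finsupp.sum_add_index' (fun u => ?_) (fun u c c' => ?_)
  · simp
  · rw [← Finsupp.sum_add]
    congr 1; funext v cv
    rw [add_mul, add_smul]

lemma preMul_add_right (f g g' : List ι →₀ k) :
    preMul f (g + g') = preMul f g + preMul f g' := by
  rw [preMul, preMul, preMul, ← Finsupp.sum_add]
  congr 1; funext u cu
  exact Finsupp.sum_add_index' (fun v => by simp) (fun v c c' => by rw [mul_add, add_smul])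

lemma preMul_smul_left (c : k) (f g : List ι →₀ k) :
    preMul (c • f) g = c • preMul f g := by
  rw [preMul, preMul, Finsupp.sum_smul_index (fun u => by simp), Finsupp.smul_sum]
  congr 1; funext u cu
  rw [Finsupp.smul_sum]
  congr 1; funext v cv
  rw [smul_smul, mul_assoc]

lemma preMul_smul_right (c : k) (f g : List ι →₀ k) :
    preMul f (c • g) = c • preMul f g := by
  rw [preMul, preMul, Finsupp.smul_sum]
  congr 1; funext u cu
  rw [Finsupp.sum_smul_index (fun v => by simp), Finsupp.smul_sum]
  congr 1; funext v cv
  rw [smul_smul, mul_left_comm]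
lemma preMul_single_one_left (u : List ι) (g : List ι →₀ k) :
    preMul (Finsupp.single u 1) g = g.sum fun v cv => cv • preMulWord u v := by
  rw [preMul, Finsupp.sum_single_index (by simp)]
  simp only [one_mul]

lemma preMul_single_one_right (f : List ι →₀ k) (w : List ι) :
    preMul f (Finsupp.single w 1) = f.sum fun u cu => cu • preMulWord u w := by
  rw [preMul]
  congr 1; funext u cu
  rw [Finsupp.sum_single_index (by simp), mul_one]

lemma preMul_single_single (u v : List ι) :
    preMul (Finsupp.single u (1 : k)) (Finsupp.single v 1) = preMulWord u v := by
  rw [preMul_single_one_left, Finsupp.sum_single_index (by simp), one_smul]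

lemma key (u v w : List ι) :
    preMul (shuffleWord (k := k) u v) (Finsupp.single w 1) =
      preMul (Finsupp.single u 1) (preMulWord v w) := by
  rcases List.eq_nil_or_concat w with rfl | ⟨w', n, rfl⟩
  · rw [preMul_single_one_right]
    simp [preMulWord_nil_right, preMul_zero_right]
  · simp only [List.concat_eq_append]
    rw [preMul_single_one_right, preMulWord_concat, preMul_single_one_left,
      Finsupp.sum_mapDomain_index (fun t => by simp) (fun t c c' => add_smul c c' _)]
    simp only [preMulWord_concat]
    rw [smulsum_mapDomain, smulsum_mapDomain]
    exact congrArg _ (shuffle_assoc u v w')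


theorem aux_main :
    ∀ x ∈ reducedTensor k ι, ∀ y ∈ reducedTensor k ι, ∀ z : (List ι →₀ k),
      preMul (preMul x y + preMul y x) z = preMul x (preMul y z) := by
  intro x hx y hy
  induction hx, hy using Submodule.span_induction₂ with
  | mem_mem x y hx hy =>
    obtain ⟨u, hu, rfl⟩ := hx
    obtain ⟨v, hv, rfl⟩ := hy
    intro z
    induction z using Finsupp.induction_linear with
    | zero => simp [preMul_zero_right]
    | add f g hf hg => rw [preMul_add_right, preMul_add_right, hf, hg, ← preMul_add_right]
    | single w c =>
      have hc : (Finsupp.single w c : List ι →₀ k) = c • Finsupp.single w 1 := by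
        rw [Finsupp.smul_single, smul_eq_mul, mul_one]
      rw [hc, preMul_smul_right, preMul_smul_right, preMul_smul_right]
      congr 1
      rw [preMul_single_single, preMul_single_single, preMulWord_combine (Or.inl hu), key,
        preMul_single_single]
  | zero_left y hy => intro z; simp [preMul_zero_left, preMul_zero_right]
  | zero_right x hx => intro z; simp [preMul_zero_left, preMul_zero_right]
  | add_left x x' y hx hx' hy h1 h2 =>
    intro z
    rw [preMul_add_left x x' y, preMul_add_right y x x', add_add_add_comm, preMul_add_left,
      h1 z, h2 z, ← preMul_add_left]
  | add_right x y y' hx hy hy' h1 h2 =>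
    intro z
    rw [preMul_add_right x y y', preMul_add_left y y' x, add_add_add_comm, preMul_add_left,
      h1 z, h2 z, preMul_add_left y y' z, preMul_add_right]
  | smul_left r x y hx hy h =>
    intro z
    rw [preMul_smul_left r x y, preMul_smul_right r y x, ← smul_add, preMul_smul_left, h z,
      ← preMul_smul_left]
  | smul_right r x y hx hy h =>
    intro z
    rw [preMul_smul_right r x y, preMul_smul_left r y x, ← smul_add, preMul_smul_left, h z,
      preMul_smul_left r y z, preMul_smul_right]


end Aux

/-- The reduced tensor space with the half-shuffle product `≻` is a
precommutative (Zinbiel) algebra. -/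
theorem reducedTensor_preMul_zinbiel {k ι : Type*} [Field k] :
    ∀ x ∈ reducedTensor k ι, ∀ y ∈ reducedTensor k ι, ∀ z ∈ reducedTensor k ι,
      preMul (preMul x y + preMul y x) z = preMul x (preMul y z) :=
  fun x hx y hy z _ => aux_main x hx y hy z
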